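/- The one-point Lindelöfication of a discrete space of cardinality ℵ₁ is a Menger space that does not satisfy S_fin(𝓐,𝓐). -/

import Mathlib

open Set

/-- A space is Menger if for every sequence of open covers one can choose finite
subfamilies whose union is a cover. -/
def Menger (X : Type*) [TopologicalSpace X] : Prop :=
  ∀ U : ℕ → Set (Set X),
    (∀ n, (∀ s ∈ U n, IsOpen s) ∧ ⋃₀ U n = Set.univ) →
    ∃ V : ℕ → Set (Set X),
      (∀ n, V n ⊆ U n ∧ (V n).Finite) ∧ ⋃₀ (⋃ n, V n) = Set.univ

/-- A family of open sets is an almost covering if the complement of its union is compact. -/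
def AlmostCover {X : Type*} [TopologicalSpace X] (U : Set (Set X)) : Prop :=
  (∀ s ∈ U, IsOpen s) ∧ IsCompact (⋃₀ U)ᶜ

/-- The selection principle `S_fin(𝓐,𝓐)` for almost coverings. -/
def SfinAA (X : Type*) [TopologicalSpace X] : Prop :=
  ∀ U : ℕ → Set (Set X), (∀ n, AlmostCover (U n)) →
    ∃ V : ℕ → Set (Set X),
      (∀ n, V n ⊆ U n ∧ (V n).Finite) ∧ IsCompact (⋃₀ (⋃ n, V n))ᶜ

/-- A sequence of sets is a closed net at `K` if each member is closed and contains `K`,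
and every open neighborhood of `K` contains some member. -/
def ClosedNetSeqAt {X : Type*} [TopologicalSpace X] (F : ℕ → Set X) (K : Set X) : Prop :=
  (∀ n, IsClosed (F n) ∧ K ⊆ F n) ∧
    ∀ A : Set X, IsOpen A → K ⊆ A → ∃ n, F n ⊆ A

/-- A decreasing closed net at `K`. -/
def DecClosedNetSeqAt {X : Type*} [TopologicalSpace X] (F : ℕ → Set X) (K : Set X) : Prop :=
  (∀ n, F (n + 1) ⊆ F n) ∧ ClosedNetSeqAt F K

/-- A compact set `Q` has a countable (outer) neighborhood base in `X`. -/
def HasCountableOuterBase {X : Type*} [TopologicalSpace X] (Q : Set X) : Prop :=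
  ∃ B : ℕ → Set X, (∀ k, IsOpen (B k) ∧ Q ⊆ B k) ∧
    ∀ A : Set X, IsOpen A → Q ⊆ A → ∃ k, B k ⊆ A

/-- `X` is of countable type: every compact set is contained in a compact set having a
countable neighborhood base in `X`. -/
def CountableType (X : Type*) [TopologicalSpace X] : Prop :=
  ∀ K : Set X, IsCompact K → ∃ Q : Set X, IsCompact Q ∧ K ⊆ Q ∧ HasCountableOuterBase Q

/-- The remainder `βX \ X` of the Stone–Čech compactification. -/
abbrev StoneCechRemainder (X : Type*) [TopologicalSpace X] : Set (StoneCech X) :=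
  (Set.range (stoneCechUnit : X → StoneCech X))ᶜ


/-- The one-point Lindelofication of `D`: the extra point is `none`,
points of `D` are isolated, and neighborhoods of `none` are co-countable. -/
def Lind (D : Type*) := Option D

instance (D : Type*) : TopologicalSpace (Lind D) where
  IsOpen s := (none : Option D) ∈ s → sᶜ.Countable
  isOpen_univ := fun _ => by simp
  isOpen_inter := fun s t hs ht h => by
    rw [Set.compl_inter]; exact (hs h.1).union (ht h.2)
  isOpen_sUnion := fun S hS h => by
    obtain ⟨s, hsS, hns⟩ := h
    exact ((hS s hsS) hns).mono (Set.compl_subset_compl.mpr (Set.subset_sUnion_of_mem hsS))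


lemma lind_isOpen_iff {D : Type*} {s : Set (Lind D)} :
    IsOpen s ↔ ((none : Option D) ∈ s → sᶜ.Countable) := Iff.rfl

lemma lind_isOpen_singleton {D : Type*} (d : D) :
    IsOpen ({(some d : Lind D)} : Set (Lind D)) := by
  rw [lind_isOpen_iff]
  intro h
  have h' : (none : Option D) = some d := h
  exact absurd h'.symm (Option.some_ne_none d)

lemma lind_not_compact {D : Type*} {K : Set (Lind D)}
    (h : {d : D | (some d : Lind D) ∈ K}.Infinite) : ¬ IsCompact K := by
  intro hK
  let e := Set.Infinite.natEmbedding _ h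
  let C : ℕ → D := fun n => (e n : D)
  have hCinj : Function.Injective C := fun a b hab => e.injective (Subtype.ext hab)
  have hCmem : ∀ n, (some (C n) : Lind D) ∈ K := fun n => (e n).2
  let U : Option ℕ → Set (Lind D) := fun i =>
    Option.casesOn i (Set.range fun n => (some (C n) : Lind D))ᶜ
      (fun n => {(some (C n) : Lind D)})
  have hopen : ∀ i, IsOpen (U i) := by
    intro i
    cases i with
    | none =>
      rw [lind_isOpen_iff]
      intro _
      rw [compl_compl]
      exact Set.countable_range _
    | some n => exact lind_isOpen_singleton (C n)
  have hcover : K ⊆ ⋃ i, U i := by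
    intro x hx
    by_cases hx' : x ∈ Set.range fun n => (some (C n) : Lind D)
    · obtain ⟨n, rfl⟩ := hx'
      exact Set.mem_iUnion.2 ⟨some n, rfl⟩
    · exact Set.mem_iUnion.2 ⟨none, hx'⟩
  obtain ⟨t, ht⟩ := hK.elim_finite_subcover U hopen hcover
  have hfin : {n : ℕ | some n ∈ t}.Finite :=
    t.finite_toSet.preimage (Option.some_injective ℕ).injOn
  obtain ⟨n, hn⟩ := hfin.infinite_compl.nonempty
  have := ht (hCmem n)
  replace this := Set.mem_iUnion₂.1 this
  obtain ⟨i, hit, hxi⟩ := this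
  cases i with
  | none => exact hxi ⟨n, rfl⟩
  | some m =>
    have : (some (C n) : Lind D) = some (C m) := hxi
    have : n = m := hCinj (Option.some_injective D this)
    exact hn (by simpa [this] using hit)

lemma lind_menger (D : Type*) : Menger (Lind D) := by
  intro U hU
  -- pick a set containing `none` from `U 0`
  have h0 : (none : Option D) ∈ ⋃₀ U 0 := (hU 0).2 ▸ Set.mem_univ _
  obtain ⟨s₀, hs₀U, hs₀⟩ := h0
  have hs₀c : (s₀ᶜ : Set (Lind D)).Countable := ((hU 0).1 s₀ hs₀U) hs₀
  have : Nonempty (Lind D) := ⟨(none : Option D)⟩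
  obtain ⟨f, hf⟩ : ∃ f : ℕ → Lind D, s₀ᶜ ⊆ Set.range f :=
    (Set.countable_iff_exists_subset_range).1 hs₀c
  have hsel : ∀ n : ℕ, ∃ t ∈ U (n + 1), f n ∈ t := by
    intro n
    have : f n ∈ ⋃₀ U (n + 1) := (hU (n + 1)).2 ▸ Set.mem_univ _
    exact this
  choose t htU htf using hsel
  refine ⟨fun n => Nat.casesOn n {s₀} (fun k => {t k}), ?_, ?_⟩
  · intro n
    cases n with
    | zero => exact ⟨by simpa using hs₀U, Set.finite_singleton _⟩
    | succ k => exact ⟨by simpa using htU k, Set.finite_singleton _⟩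
  · apply Set.eq_univ_of_forall
    intro x
    by_cases hx : x ∈ s₀
    · exact ⟨s₀, Set.mem_iUnion.2 ⟨0, rfl⟩, hx⟩
    · obtain ⟨n, rfl⟩ := hf hx
      exact ⟨t n, Set.mem_iUnion.2 ⟨n + 1, rfl⟩, htf n⟩

theorem stmt17 (D : Type*) (hD : Cardinal.mk D = Cardinal.aleph 1) :
    Menger (Lind D) ∧ ¬ SfinAA (Lind D) := by
  refine ⟨lind_menger D, ?_⟩
  intro hS
  -- the almost covers consisting of all singletons of isolated points
  set U : ℕ → Set (Set (Lind D)) :=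
    fun _ => Set.range (fun d : D => ({(some d : Lind D)} : Set (Lind D))) with hUdef
  have hAC : ∀ n, AlmostCover (U n) := by
    intro n
    constructor
    · rintro s ⟨d, rfl⟩
      exact lind_isOpen_singleton d
    · have : (⋃₀ U n)ᶜ = {(none : Lind D)} := by
        ext x
        simp only [Set.mem_compl_iff, Set.mem_sUnion, hUdef, Set.mem_range,
          Set.mem_singleton_iff]
        constructor
        · intro h
          cases x with
          | none => rfl
          | some d => exact absurd ⟨{some d}, ⟨d, rfl⟩, rfl⟩ h
        · rintro rfl ⟨s, ⟨d, rfl⟩, hx⟩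
          have hx' : (none : Option D) = some d := hx
          exact Option.some_ne_none d hx'.symm
      rw [this]
      exact Set.finite_singleton _ |>.isCompact
  obtain ⟨V, hV, hVc⟩ := hS U hAC
  -- the union of the selected singletons is countable
  have hTc : (⋃ n, V n).Countable :=
    Set.countable_iUnion fun n => (hV n).2.countable
  have hUnionc : (⋃₀ ⋃ n, V n).Countable := by
    apply Set.Countable.sUnion hTc
    intro s hs
    obtain ⟨n, hn⟩ := Set.mem_iUnion.1 hs
    obtain ⟨d, rfl⟩ := (hV n).1 hn
    exact Set.countable_singleton _
  -- so its complement meets `some '' D` in an uncountable, hence infinite, set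
  have hpre : {d : D | (some d : Lind D) ∈ ⋃₀ ⋃ n, V n}.Countable :=
    hUnionc.preimage (Option.some_injective D)
  have hDinf : ¬ (Set.univ : Set D).Countable := by
    intro h
    have : Countable D := Set.countable_univ_iff.1 h
    have : Cardinal.mk D ≤ Cardinal.aleph0 := Cardinal.mk_le_aleph0
    rw [hD] at this
    exact absurd this (not_le.2 Cardinal.aleph0_lt_aleph_one)
  have hinf : {d : D | (some d : Lind D) ∈ (⋃₀ ⋃ n, V n)ᶜ}.Infinite := by
    intro hfin
    apply hDinf
    have : (Set.univ : Set D) ⊆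
        {d : D | (some d : Lind D) ∈ ⋃₀ ⋃ n, V n} ∪
        {d : D | (some d : Lind D) ∈ (⋃₀ ⋃ n, V n)ᶜ} := by
      intro d _
      by_cases h : (some d : Lind D) ∈ ⋃₀ ⋃ n, V n
      · exact Or.inl h
      · exact Or.inr h
    exact Set.Countable.mono this (hpre.union hfin.countable)
  exact lind_not_compact hinf hVc
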